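/- Let d = 2 and let ‖·‖₁ denote the Manhattan (ℓ¹) norm on ℝ². For any unimodular lattice L in ℝ², any α ∈ ℝ², and any integer N ≥ 1, the number g_N^{ℓ¹}(α,L) of distinct values taken by the nearest-neighbor distances δ^{ℓ¹}_{n,N}, 1 ≤ n ≤ N, with respect to the Manhattan metric, satisfies g_N^{ℓ¹}(α,L) ≤ 5. -/

import Mathlib

open Matrix Set

/-- The point of the lattice `ℤ^d M₀` corresponding to the integer row vector `w`. -/
noncomputable def latticeVec {d : ℕ} (M₀ : Matrix (Fin d) (Fin d) ℝ) (w : Fin d → ℤ) :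
    Fin d → ℝ :=
  (fun i => (w i : ℝ)) ᵥ* M₀

/-- `δ*_{n,N}`: the smallest positive distance, in the maximum metric (the sup norm on
`Fin d → ℝ`), from `n α` to a point `m α + ℓ` with `1 ≤ m ≤ N` and `ℓ ∈ ℤ^d M₀`. -/
noncomputable def deltaStar {d : ℕ} (M₀ : Matrix (Fin d) (Fin d) ℝ) (α : Fin d → ℝ)
    (N n : ℕ) : ℝ :=
  sInf { r : ℝ | ∃ (m : ℕ) (w : Fin d → ℤ), 1 ≤ m ∧ m ≤ N ∧
    r = ‖(n : ℝ) • α - (m : ℝ) • α - latticeVec M₀ w‖ ∧ 0 < r }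

/-- `g_N^*(α, ℤ^d M₀)`: the number of distinct values among `δ*_{1,N}, …, δ*_{N,N}`. -/
noncomputable def gStar {d : ℕ} (M₀ : Matrix (Fin d) (Fin d) ℝ) (α : Fin d → ℝ) (N : ℕ) : ℕ :=
  { x : ℝ | ∃ n : ℕ, 1 ≤ n ∧ n ≤ N ∧ x = deltaStar M₀ α N n }.ncard

/-- `δ^{ℓ¹}_{n,N}`: the smallest positive distance, in the Manhattan (ℓ¹) metric, from
`n α` to a point `m α + ℓ` with `1 ≤ m ≤ N` and `ℓ ∈ ℤ^d M₀`. -/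
noncomputable def deltaOne {d : ℕ} (M₀ : Matrix (Fin d) (Fin d) ℝ) (α : Fin d → ℝ)
    (N n : ℕ) : ℝ :=
  sInf { r : ℝ | ∃ (m : ℕ) (w : Fin d → ℤ), 1 ≤ m ∧ m ≤ N ∧
    r = ∑ i, |((n : ℝ) • α - (m : ℝ) • α - latticeVec M₀ w) i| ∧ 0 < r }

/-- `g_N^{ℓ¹}(α, ℤ^d M₀)`: the number of distinct values among
`δ^{ℓ¹}_{1,N}, …, δ^{ℓ¹}_{N,N}`. -/
noncomputable def gOne {d : ℕ} (M₀ : Matrix (Fin d) (Fin d) ℝ) (α : Fin d → ℝ) (N : ℕ) : ℕ :=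
  { x : ℝ | ∃ n : ℕ, 1 ≤ n ∧ n ≤ N ∧ x = deltaOne M₀ α N n }.ncard


namespace Gaps

noncomputable def n1 (v : Fin 2 → ℝ) : ℝ := ∑ i, |v i|

lemma n1_nonneg (v : Fin 2 → ℝ) : 0 ≤ n1 v :=
  Finset.sum_nonneg fun _ _ => abs_nonneg _

lemma n1_eq_zero {v : Fin 2 → ℝ} (h : n1 v = 0) : v = 0 := by
  have h0 : ∀ i ∈ Finset.univ, |v i| = 0 :=
    (Finset.sum_eq_zero_iff_of_nonneg (fun i _ => abs_nonneg _)).1 h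
  funext i
  simpa using abs_eq_zero.mp (h0 i (Finset.mem_univ i))

lemma n1_pos {v : Fin 2 → ℝ} (h : v ≠ 0) : 0 < n1 v := by
  rcases lt_or_eq_of_le (n1_nonneg v) with h1 | h1
  · exact h1
  · exact absurd (n1_eq_zero h1.symm) h

lemma n1_neg (v : Fin 2 → ℝ) : n1 (-v) = n1 v := by
  unfold n1; simp

variable (M₀ : Matrix (Fin 2) (Fin 2) ℝ)

lemma lv_sub (w w' : Fin 2 → ℤ) :
    latticeVec M₀ (w - w') = latticeVec M₀ w - latticeVec M₀ w' := by
  unfold latticeVec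
  have : (fun i => ((w - w') i : ℝ)) = (fun i => (w i : ℝ)) - (fun i => (w' i : ℝ)) := by
    funext i; push_cast; simp
  rw [this, Matrix.sub_vecMul]

lemma lv_zero : latticeVec M₀ (0 : Fin 2 → ℤ) = 0 := by
  unfold latticeVec
  have : (fun i => ((0 : Fin 2 → ℤ) i : ℝ)) = (0 : Fin 2 → ℝ) := by funext i; simp
  rw [this, Matrix.zero_vecMul]

lemma lv_neg (w : Fin 2 → ℤ) : latticeVec M₀ (-w) = - latticeVec M₀ w := by
  have h := lv_sub M₀ 0 w
  rw [zero_sub, lv_zero, zero_sub] at h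
  exact h

lemma lv_recover (hM₀ : M₀.det = 1) (w : Fin 2 → ℤ) :
    (fun i => (w i : ℝ)) = (latticeVec M₀ w) ᵥ* M₀⁻¹ := by
  unfold latticeVec
  rw [Matrix.vecMul_vecMul, Matrix.mul_nonsing_inv _ (by rw [hM₀]; exact isUnit_one),
    Matrix.vecMul_one]

lemma lv_inj (hM₀ : M₀.det = 1) {w w' : Fin 2 → ℤ} (h : latticeVec M₀ w = latticeVec M₀ w') : w = w' := by
  have h1 := lv_recover M₀ hM₀ w
  have h2 := lv_recover M₀ hM₀ w'
  rw [h] at h1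
  funext i
  have : ((w i : ℝ)) = ((w' i : ℝ)) := by rw [congrFun h1 i, congrFun h2 i]
  exact_mod_cast this


/-- Existence of a closest lattice translate at positive distance. -/
lemma exMin (hM₀ : M₀.det = 1) (x : Fin 2 → ℝ) :
    ∃ w : Fin 2 → ℤ, 0 < n1 (x - latticeVec M₀ w) ∧
      ∀ w' : Fin 2 → ℤ, 0 < n1 (x - latticeVec M₀ w') →
        n1 (x - latticeVec M₀ w) ≤ n1 (x - latticeVec M₀ w') := by
  -- a point at positive distance exists
  have hw0 : ∃ w₀ : Fin 2 → ℤ, 0 < n1 (x - latticeVec M₀ w₀) := by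
    by_cases h : x - latticeVec M₀ 0 = 0
    · set e : Fin 2 → ℤ := Pi.single (0 : Fin 2) (1 : ℤ) with he
      refine ⟨e, n1_pos ?_⟩
      rw [lv_zero, sub_zero] at h
      intro hc
      rw [sub_eq_zero] at hc
      have heq : latticeVec M₀ e = latticeVec M₀ 0 := by
        rw [lv_zero, ← h, hc]
      have h2 := lv_inj M₀ hM₀ heq
      have h3 : e 0 = 0 := by rw [h2]; rfl
      rw [he] at h3
      simp at h3
    · exact ⟨0, n1_pos h⟩
  obtain ⟨w₀, hw₀⟩ := hw0
  set r₀ := n1 (x - latticeVec M₀ w₀) with hr₀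
  -- entry bound for M₀⁻¹
  set K : ℝ := |M₀⁻¹ 0 0| + |M₀⁻¹ 0 1| + |M₀⁻¹ 1 0| + |M₀⁻¹ 1 1| with hK
  have hKnn : 0 ≤ K := by positivity
  have hKe : ∀ i j, |M₀⁻¹ i j| ≤ K := by
    intro i j
    have a00 : 0 ≤ |M₀⁻¹ 0 0| := abs_nonneg _
    have a01 : 0 ≤ |M₀⁻¹ 0 1| := abs_nonneg _
    have a10 : 0 ≤ |M₀⁻¹ 1 0| := abs_nonneg _
    have a11 : 0 ≤ |M₀⁻¹ 1 1| := abs_nonneg _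
    have htwo : ∀ k : Fin 2, k = 0 ∨ k = 1 := by decide
    rcases htwo i with rfl | rfl <;> rcases htwo j with rfl | rfl <;> rw [hK] <;> linarith
  set C : ℝ := n1 x + r₀ with hC
  have hCpos : 0 < C := lt_add_of_le_of_pos (n1_nonneg x) hw₀
  set B : ℤ := ⌈C * K⌉ with hB
  set T : Finset (Fin 2 → ℤ) := Finset.Icc (fun _ => -B) (fun _ => B) with hT
  -- any w whose distance is ≤ r₀ lies in T
  have hbound : ∀ w : Fin 2 → ℤ, n1 (x - latticeVec M₀ w) ≤ r₀ → w ∈ T := by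
    intro w hw
    have hlv : n1 (latticeVec M₀ w) ≤ C := by
      have : ∀ i ∈ Finset.univ, |latticeVec M₀ w i| ≤ |x i| + |(x - latticeVec M₀ w) i| := by
        intro i _
        have : latticeVec M₀ w i = x i - (x - latticeVec M₀ w) i := by
          simp
        rw [this]
        exact abs_sub _ _
      calc n1 (latticeVec M₀ w) ≤ ∑ i, (|x i| + |(x - latticeVec M₀ w) i|) :=
            Finset.sum_le_sum this
        _ = n1 x + n1 (x - latticeVec M₀ w) := by rw [Finset.sum_add_distrib]; rfl
        _ ≤ C := by rw [hC]; linarith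
    have hcoord : ∀ i, |(w i : ℝ)| ≤ C * K := by
      intro i
      have hrec := congrFun (lv_recover M₀ hM₀ w) i
      have hv : ((w i : ℝ)) = ∑ j, latticeVec M₀ w j * M₀⁻¹ j i := by
        rw [hrec]; simp [Matrix.vecMul, dotProduct]
      rw [hv]
      calc |∑ j, latticeVec M₀ w j * M₀⁻¹ j i| ≤ ∑ j, |latticeVec M₀ w j * M₀⁻¹ j i| :=
            Finset.abs_sum_le_sum_abs _ _
        _ ≤ ∑ j, |latticeVec M₀ w j| * K := by
            refine Finset.sum_le_sum fun j _ => ?_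
            rw [abs_mul]
            exact mul_le_mul_of_nonneg_left (hKe j i) (abs_nonneg _)
        _ = n1 (latticeVec M₀ w) * K := by rw [← Finset.sum_mul]; rfl
        _ ≤ C * K := mul_le_mul_of_nonneg_right hlv hKnn
    rw [hT, Finset.mem_Icc]
    constructor <;> (intro i; simp only []) 
    · have h1 : -(C * K) ≤ (w i : ℝ) := neg_le_of_abs_le (hcoord i)
      have h2 : (((-B : ℤ)) : ℝ) ≤ (w i : ℝ) := by
        push_cast
        calc -(B : ℝ) ≤ -(C * K) := by
              have := Int.le_ceil (C * K); rw [hB]; push_cast; linarith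
          _ ≤ (w i : ℝ) := h1
      exact_mod_cast h2
    · have h1 : (w i : ℝ) ≤ C * K := le_of_abs_le (hcoord i)
      have h2 : (w i : ℝ) ≤ ((B : ℤ) : ℝ) := by
        calc (w i : ℝ) ≤ C * K := h1
          _ ≤ (B : ℝ) := by have := Int.le_ceil (C * K); rw [hB]; exact_mod_cast this
      exact_mod_cast h2
  -- the finite candidate set of values
  set P : Finset ℝ :=
    (T.image (fun w => n1 (x - latticeVec M₀ w))).filter (fun r => 0 < r) with hP
  have hr₀P : r₀ ∈ P := by
    rw [hP, Finset.mem_filter]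
    exact ⟨Finset.mem_image.2 ⟨w₀, hbound w₀ le_rfl, rfl⟩, hw₀⟩
  have hPne : P.Nonempty := ⟨r₀, hr₀P⟩
  obtain ⟨hmem, hpos⟩ := Finset.mem_filter.1 (P.min'_mem hPne)
  obtain ⟨w₁, hw₁T, hw₁⟩ := Finset.mem_image.1 hmem
  refine ⟨w₁, by rw [hw₁]; exact hpos, ?_⟩
  intro w' hw'
  by_cases hcase : n1 (x - latticeVec M₀ w') ≤ r₀
  · have : n1 (x - latticeVec M₀ w') ∈ P := by
      rw [hP, Finset.mem_filter]
      exact ⟨Finset.mem_image.2 ⟨w', hbound w' hcase, rfl⟩, hw'⟩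
    rw [hw₁]
    exact P.min'_le _ this
  · have h1 : P.min' hPne ≤ r₀ := P.min'_le _ hr₀P
    rw [hw₁]
    linarith [not_le.1 hcase]

lemma n1_two (v : Fin 2 → ℝ) : n1 v = |v 0| + |v 1| := by
  unfold n1; rw [Fin.sum_univ_two]

lemma l1_eq_max (x y : ℝ) : |x| + |y| = max |x + y| |x - y| := by
  apply le_antisymm
  · rcases le_total 0 x with hx | hx <;> rcases le_total 0 y with hy | hy
    · refine le_max_of_le_left ?_
      rw [abs_of_nonneg hx, abs_of_nonneg hy, abs_of_nonneg (by linarith)]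
    · refine le_max_of_le_right ?_
      rw [abs_of_nonneg hx, abs_of_nonpos hy, abs_of_nonneg (by linarith)]; linarith
    · refine le_max_of_le_right ?_
      rw [abs_of_nonpos hx, abs_of_nonneg hy, abs_of_nonpos (by linarith)]; linarith
    · refine le_max_of_le_left ?_
      rw [abs_of_nonpos hx, abs_of_nonpos hy, abs_of_nonpos (by linarith)]; linarith
  · apply max_le
    · exact abs_add_le x y
    · calc |x - y| = |x + (-y)| := by ring_nf
        _ ≤ |x| + |(-y)| := abs_add_le _ _
        _ = |x| + |y| := by rw [abs_neg]
lemma abs_sub_le_max {a b : ℝ} (h : (0 ≤ a ↔ 0 ≤ b)) : |a - b| ≤ max |a| |b| := by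
  by_cases ha : 0 ≤ a
  · have hb : 0 ≤ b := h.mp ha
    rcases le_total a b with hab | hab
    · refine le_max_of_le_right ?_
      rw [abs_of_nonpos (by linarith), abs_of_nonneg hb]; linarith
    · refine le_max_of_le_left ?_
      rw [abs_of_nonneg (by linarith), abs_of_nonneg ha]; linarith
  · have hb : ¬ (0 ≤ b) := fun hb => ha (h.mpr hb)
    push_neg at ha hb
    rcases le_total a b with hab | hab
    · refine le_max_of_le_left ?_
      rw [abs_of_nonpos (by linarith), abs_of_nonpos (le_of_lt ha)]; linarith
    · refine le_max_of_le_right ?_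
      rw [abs_of_nonneg (by linarith), abs_of_nonpos (le_of_lt hb)]; linarith

/-- Five points in the plane cannot be pairwise farther apart (in `ℓ¹`) than the larger
of their `ℓ¹` norms. -/
lemma five_vectors {R5 : Finset ℕ} (h5 : 4 < R5.card) (u : ℕ → Fin 2 → ℝ)
    (h : ∀ s ∈ R5, ∀ t ∈ R5, s ≠ t →
      max (n1 (u s)) (n1 (u t)) < n1 (u s - u t)) : False := by
  classical
  set φ : ℕ → Bool × Bool :=
    fun t => (decide (0 ≤ u t 0 + u t 1), decide (0 ≤ u t 0 - u t 1)) with hφ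
  have hmap : ∀ t ∈ R5, φ t ∈ (Finset.univ : Finset (Bool × Bool)) := fun _ _ => Finset.mem_univ _
  have hcard : (Finset.univ : Finset (Bool × Bool)).card < R5.card := by
    simpa using h5
  obtain ⟨s, hs, t, ht, hne, heq⟩ :=
    Finset.exists_ne_map_eq_of_card_lt_of_maps_to hcard hmap
  have hp : (0 ≤ u s 0 + u s 1) ↔ (0 ≤ u t 0 + u t 1) := by
    have := congrArg Prod.fst heq
    simpa [hφ] using this
  have hq : (0 ≤ u s 0 - u s 1) ↔ (0 ≤ u t 0 - u t 1) := by
    have := congrArg Prod.snd heq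
    simpa [hφ] using this
  have key := h s hs t ht hne
  have e1 : n1 (u s - u t) = max |(u s 0 + u s 1) - (u t 0 + u t 1)|
      |(u s 0 - u s 1) - (u t 0 - u t 1)| := by
    rw [n1_two]
    have h0 : (u s - u t) 0 = u s 0 - u t 0 := rfl
    have h1 : (u s - u t) 1 = u s 1 - u t 1 := rfl
    rw [h0, h1, l1_eq_max]
    congr 1 <;> ring_nf
  have e2 : n1 (u s) = max |u s 0 + u s 1| |u s 0 - u s 1| := by
    rw [n1_two, l1_eq_max]
  have e3 : n1 (u t) = max |u t 0 + u t 1| |u t 0 - u t 1| := by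
    rw [n1_two, l1_eq_max]
  have b1 : |(u s 0 + u s 1) - (u t 0 + u t 1)| ≤ max (n1 (u s)) (n1 (u t)) := by
    calc |(u s 0 + u s 1) - (u t 0 + u t 1)| ≤ max |u s 0 + u s 1| |u t 0 + u t 1| :=
          abs_sub_le_max hp
      _ ≤ max (n1 (u s)) (n1 (u t)) := by
          apply max_le_max <;> [rw [e2]; rw [e3]] <;> exact le_max_left _ _
  have b2 : |(u s 0 - u s 1) - (u t 0 - u t 1)| ≤ max (n1 (u s)) (n1 (u t)) := by
    calc |(u s 0 - u s 1) - (u t 0 - u t 1)| ≤ max |u s 0 - u s 1| |u t 0 - u t 1| :=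
          abs_sub_le_max hq
      _ ≤ max (n1 (u s)) (n1 (u t)) := by
          apply max_le_max <;> [rw [e2]; rw [e3]] <;> exact le_max_right _ _
  rw [e1] at key
  have := max_le b1 b2
  linarith [lt_of_lt_of_le key this]

section Main
variable (M₀ : Matrix (Fin 2) (Fin 2) ℝ) (α : Fin 2 → ℝ)

open Classical in
/-- A choice of closest lattice translate of `j • α` at positive distance. -/
noncomputable def wv (j : ℕ) : Fin 2 → ℤ :=
  if h : ∃ w : Fin 2 → ℤ, 0 < n1 ((j : ℝ) • α - latticeVec M₀ w) ∧
      ∀ w' : Fin 2 → ℤ, 0 < n1 ((j : ℝ) • α - latticeVec M₀ w') →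
        n1 ((j : ℝ) • α - latticeVec M₀ w) ≤ n1 ((j : ℝ) • α - latticeVec M₀ w')
  then h.choose else 0

/-- `d_j`: the smallest positive distance from `j•α` to the lattice. -/
noncomputable def dd (j : ℕ) : ℝ := n1 ((j : ℝ) • α - latticeVec M₀ (wv M₀ α j))

lemma dd_spec (hM₀ : M₀.det = 1) (j : ℕ) : 0 < dd M₀ α j ∧
    ∀ w' : Fin 2 → ℤ, 0 < n1 ((j : ℝ) • α - latticeVec M₀ w') →
      dd M₀ α j ≤ n1 ((j : ℝ) • α - latticeVec M₀ w') := by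
  unfold dd wv
  rw [dif_pos (exMin M₀ hM₀ ((j : ℝ) • α))]
  exact (exMin M₀ hM₀ ((j : ℝ) • α)).choose_spec

/-- `F J = min_{0 ≤ j ≤ J} d_j`. -/
noncomputable def FF (J : ℕ) : ℝ :=
  ((Finset.range (J + 1)).image (dd M₀ α)).min'
    (Finset.Nonempty.image ⟨0, Finset.mem_range.2 (Nat.succ_pos J)⟩ _)

lemma FF_le {j J : ℕ} (h : j ≤ J) : FF M₀ α J ≤ dd M₀ α j :=
  Finset.min'_le _ _ (Finset.mem_image.2 ⟨j, Finset.mem_range.2 (Nat.lt_succ_of_le h), rfl⟩)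

lemma FF_mem (J : ℕ) : ∃ j ≤ J, dd M₀ α j = FF M₀ α J := by
  obtain ⟨j, hj, hje⟩ := Finset.mem_image.1 (Finset.min'_mem
    ((Finset.range (J + 1)).image (dd M₀ α))
    (Finset.Nonempty.image ⟨0, Finset.mem_range.2 (Nat.succ_pos J)⟩ _))
  exact ⟨j, Nat.lt_succ_iff.1 (Finset.mem_range.1 hj), hje⟩

lemma FF_anti {J J' : ℕ} (h : J ≤ J') : FF M₀ α J' ≤ FF M₀ α J := by
  obtain ⟨j, hj, hje⟩ := FF_mem M₀ α J
  rw [← hje]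
  exact FF_le M₀ α (le_trans hj h)

lemma smul_sub_eq (n m j : ℕ) (hmn : m ≤ n) (hj : n - m = j) :
    (n : ℝ) • α - (m : ℝ) • α = (j : ℝ) • α := by
  rw [← sub_smul]
  congr 1
  have : (j : ℝ) = (n : ℝ) - (m : ℝ) := by
    rw [← hj]
    push_cast [Nat.cast_sub hmn]
    ring
  rw [this]

/-- The key identification: `deltaOne` is `F` evaluated at `max (n-1) (N-n)`. -/
lemma deltaOne_eq (hM₀ : M₀.det = 1) (N n : ℕ) (h1 : 1 ≤ n) (h2 : n ≤ N) :
    deltaOne M₀ α N n = FF M₀ α (max (n - 1) (N - n)) := by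
  set J := max (n - 1) (N - n) with hJ
  set U := { r : ℝ | ∃ (m : ℕ) (w : Fin 2 → ℤ), 1 ≤ m ∧ m ≤ N ∧
    r = ∑ i, |((n : ℝ) • α - (m : ℝ) • α - latticeVec M₀ w) i| ∧ 0 < r } with hU
  have hlower : ∀ r ∈ U, FF M₀ α J ≤ r := by
    rintro r ⟨m, w, hm1, hmN, hre, hrpos⟩
    have hre' : r = n1 ((n : ℝ) • α - (m : ℝ) • α - latticeVec M₀ w) := hre
    rcases le_total m n with hmn | hnm
    · set j := n - m with hj
      have hjJ : j ≤ J := le_trans (by omega) (le_max_left _ _)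
      have hveq : (n : ℝ) • α - (m : ℝ) • α - latticeVec M₀ w
          = (j : ℝ) • α - latticeVec M₀ w := by
        rw [smul_sub_eq α n m j hmn hj.symm]
      rw [hre', hveq]
      refine le_trans (FF_le M₀ α hjJ) ((dd_spec M₀ α hM₀ j).2 w ?_)
      rw [← hveq, ← hre']; exact hrpos
    · set j := m - n with hj
      have hjJ : j ≤ J := le_trans (by omega) (le_max_right _ _)
      have hveq : (n : ℝ) • α - (m : ℝ) • α - latticeVec M₀ w
          = -((j : ℝ) • α - latticeVec M₀ (-w)) := by
        rw [lv_neg, ← smul_sub_eq α m n j hnm hj.symm]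
        abel
      have hn1 : n1 ((n : ℝ) • α - (m : ℝ) • α - latticeVec M₀ w)
          = n1 ((j : ℝ) • α - latticeVec M₀ (-w)) := by
        rw [hveq, n1_neg]
      rw [hre', hn1]
      refine le_trans (FF_le M₀ α hjJ) ((dd_spec M₀ α hM₀ j).2 (-w) ?_)
      rw [← hn1, ← hre']; exact hrpos
  have hmem : FF M₀ α J ∈ U := by
    obtain ⟨j₀, hj₀J, hj₀⟩ := FF_mem M₀ α J
    by_cases hc : j₀ ≤ n - 1
    · refine ⟨n - j₀, wv M₀ α j₀, by omega, by omega, ?_, ?_⟩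
      · have hveq : (n : ℝ) • α - ((n - j₀ : ℕ) : ℝ) • α - latticeVec M₀ (wv M₀ α j₀)
            = (j₀ : ℝ) • α - latticeVec M₀ (wv M₀ α j₀) := by
          rw [smul_sub_eq α n (n - j₀) j₀ (by omega) (by omega)]
        rw [show (∑ i, |((n : ℝ) • α - ((n - j₀ : ℕ) : ℝ) • α -
            latticeVec M₀ (wv M₀ α j₀)) i|) = n1 ((n : ℝ) • α - ((n - j₀ : ℕ) : ℝ) • α -
            latticeVec M₀ (wv M₀ α j₀)) from rfl, hveq, ← hj₀]
        rfl
      · rw [← hj₀]; exact (dd_spec M₀ α hM₀ j₀).1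
    · have hc2 : j₀ ≤ N - n := by
        rcases max_cases (n - 1) (N - n) with ⟨hm, _⟩ | ⟨hm, _⟩ <;> omega
      refine ⟨n + j₀, -(wv M₀ α j₀), by omega, by omega, ?_, ?_⟩
      · have hveq : (n : ℝ) • α - ((n + j₀ : ℕ) : ℝ) • α - latticeVec M₀ (-(wv M₀ α j₀))
            = -((j₀ : ℝ) • α - latticeVec M₀ (wv M₀ α j₀)) := by
          rw [lv_neg, ← smul_sub_eq α (n + j₀) n j₀ (by omega) (by omega)]
          abel
        rw [show (∑ i, |((n : ℝ) • α - ((n + j₀ : ℕ) : ℝ) • α -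
            latticeVec M₀ (-(wv M₀ α j₀))) i|) = n1 ((n : ℝ) • α - ((n + j₀ : ℕ) : ℝ) • α -
            latticeVec M₀ (-(wv M₀ α j₀))) from rfl, hveq, n1_neg, ← hj₀]
        rfl
      · rw [← hj₀]; exact (dd_spec M₀ α hM₀ j₀).1
  have hbdd : BddBelow U := ⟨FF M₀ α J, fun r hr => hlower r hr⟩
  exact le_antisymm (csInf_le hbdd hmem) (le_csInf ⟨_, hmem⟩ hlower)

end Main

theorem gapsBound (M₀ : Matrix (Fin 2) (Fin 2) ℝ) (hM₀ : M₀.det = 1)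
    (α : Fin 2 → ℝ) (N : ℕ) (hN : 1 ≤ N) :
    gOne M₀ α N ≤ 5 := by
  classical
  set Mlow : ℕ := N - (N + 1) / 2 with hMlow
  set Fs : Finset ℝ := (Finset.Icc Mlow (N - 1)).image (FF M₀ α) with hFs
  have hsub : { x : ℝ | ∃ n : ℕ, 1 ≤ n ∧ n ≤ N ∧ x = deltaOne M₀ α N n } ⊆ ↑Fs := by
    rintro x ⟨n, h1, h2, hx⟩
    rw [deltaOne_eq M₀ α hM₀ N n h1 h2] at hx
    have hJ : max (n - 1) (N - n) ∈ Finset.Icc Mlow (N - 1) := by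
      rcases max_cases (n - 1) (N - n) with ⟨he, _⟩ | ⟨he, _⟩ <;> rw [he] <;>
        rw [Finset.mem_Icc] <;> omega
    exact Finset.mem_coe.2 (Finset.mem_image.2 ⟨_, hJ, hx.symm⟩)
  have hcard : gOne M₀ α N ≤ Fs.card := by
    have := Set.ncard_le_ncard hsub Fs.finite_toSet
    rwa [Set.ncard_coe_finset] at this
  refine le_trans hcard ?_
  by_contra h6
  push_neg at h6
  -- at least six distinct values
  set xmin : ℝ := FF M₀ α Mlow with hxmin
  set Fs' : Finset ℝ := Fs.erase xmin with hFs'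
  have h5 : 5 ≤ Fs'.card := by
    rw [hFs']
    have := Finset.pred_card_le_card_erase (s := Fs) (a := xmin)
    omega
  -- minimal representing index of a value
  set T : ℝ → ℕ := fun x => sInf {t | dd M₀ α t = x} with hT
  have hkey : ∀ x ∈ Fs', dd M₀ α (T x) = x ∧ Mlow < T x ∧ T x ≤ N - 1 ∧
      ∀ s < T x, dd M₀ α (T x) < dd M₀ α s := by
    intro x hx
    obtain ⟨hxne, hxFs⟩ := Finset.mem_erase.1 hx
    obtain ⟨J, hJmem, hJx⟩ := Finset.mem_image.1 hxFs
    rw [Finset.mem_Icc] at hJmem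
    obtain ⟨t₀, ht₀J, ht₀⟩ := FF_mem M₀ α J
    have hne : {t | dd M₀ α t = x}.Nonempty := ⟨t₀, by rw [Set.mem_setOf_eq, ht₀, hJx]⟩
    have hmem : dd M₀ α (T x) = x := Nat.sInf_mem hne
    have hTle : T x ≤ J := le_trans (Nat.sInf_le (by rw [Set.mem_setOf_eq, ht₀, hJx])) ht₀J
    have hrec : ∀ s < T x, dd M₀ α (T x) < dd M₀ α s := by
      intro s hs
      have hsx : dd M₀ α s ≠ x := Nat.notMem_of_lt_sInf hs
      have : FF M₀ α J ≤ dd M₀ α s := FF_le M₀ α (le_trans (le_of_lt hs) hTle)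
      rw [hJx] at this
      rw [hmem]
      exact lt_of_le_of_ne this (Ne.symm hsx)
    have hMlT : Mlow < T x := by
      by_contra hc
      push_neg at hc
      have h1 : FF M₀ α Mlow ≤ dd M₀ α (T x) := FF_le M₀ α hc
      have h2 : FF M₀ α J ≤ FF M₀ α Mlow := FF_anti M₀ α hJmem.1
      rw [hmem] at h1
      rw [hJx] at h2
      exact hxne (le_antisymm h2 h1)
    exact ⟨hmem, hMlT, le_trans hTle hJmem.2, hrec⟩
  set R5 : Finset ℕ := Fs'.image T with hR5
  have hinj : Set.InjOn T ↑Fs' := by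
    intro x hx y hy hxy
    have h1 := (hkey x hx).1
    have h2 := (hkey y hy).1
    rw [← h1, ← h2, hxy]
  have hR5card : 4 < R5.card := by
    rw [hR5, Finset.card_image_of_injOn hinj]
    omega
  -- the five record vectors
  set u : ℕ → Fin 2 → ℝ := fun t => (t : ℝ) • α - latticeVec M₀ (wv M₀ α t) with hu
  have hun : ∀ t, n1 (u t) = dd M₀ α t := fun t => rfl
  have hprop : ∀ t ∈ R5, Mlow < t ∧ t ≤ N - 1 ∧ (∀ s < t, dd M₀ α t < dd M₀ α s) := by
    intro t ht
    obtain ⟨x, hx, hxt⟩ := Finset.mem_image.1 ht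
    obtain ⟨_, h2, h3, h4⟩ := hkey x hx
    rw [← hxt]
    exact ⟨h2, h3, h4⟩
  have hpair : ∀ s ∈ R5, ∀ t ∈ R5, s < t →
      max (n1 (u s)) (n1 (u t)) < n1 (u s - u t) := by
    intro s hs t ht hst
    obtain ⟨hMs, hsN, hrecs⟩ := hprop s hs
    obtain ⟨hMt, htN, hrect⟩ := hprop t ht
    have h2M : N - 1 ≤ 2 * Mlow := by omega
    have hdts : dd M₀ α t < dd M₀ α s := hrect s hst
    set k : ℕ := t - s with hk
    have hks : k < s := by omega
    have hk1 : 1 ≤ k := by omega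
    have hvec : u t - u s = (k : ℝ) • α - latticeVec M₀ (wv M₀ α t - wv M₀ α s) := by
      rw [hu, lv_sub, ← smul_sub_eq α t s k (le_of_lt hst) hk.symm]
      beta_reduce
      abel
    have hne0 : u t - u s ≠ 0 := by
      intro h0
      rw [sub_eq_zero] at h0
      rw [← hun t, ← hun s, h0] at hdts
      exact lt_irrefl _ hdts
    have hpos : 0 < n1 ((k : ℝ) • α - latticeVec M₀ (wv M₀ α t - wv M₀ α s)) := by
      rw [← hvec]
      exact n1_pos hne0
    have hdk : dd M₀ α k ≤ n1 (u t - u s) := by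
      rw [hvec]
      exact (dd_spec M₀ α hM₀ k).2 _ hpos
    have hsk : dd M₀ α s < dd M₀ α k := hrecs k hks
    have hmax : max (n1 (u s)) (n1 (u t)) = dd M₀ α s := by
      rw [hun, hun]
      exact max_eq_left (le_of_lt hdts)
    rw [hmax]
    calc dd M₀ α s < dd M₀ α k := hsk
      _ ≤ n1 (u t - u s) := hdk
      _ = n1 (u s - u t) := by rw [← n1_neg (u s - u t), neg_sub]
  refine five_vectors hR5card u ?_
  intro s hs t ht hne
  rcases lt_or_gt_of_ne hne with h | h
  · exact hpair s hs t ht h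
  · have := hpair t ht s hs h
    rwa [max_comm, ← n1_neg (u t - u s), neg_sub] at this

end Gaps

/-- For `d = 2`, any unimodular lattice `L = ℤ² M₀` in `ℝ²`, any `α ∈ ℝ²` and any integer
`N ≥ 1`, the number of distinct nearest-neighbour distances with respect to the Manhattan
(ℓ¹) metric satisfies `g_N^{ℓ¹}(α, L) ≤ 5`. -/
theorem gapsBound_manhattan_dim2 (M₀ : Matrix (Fin 2) (Fin 2) ℝ) (hM₀ : M₀.det = 1)
    (α : Fin 2 → ℝ) (N : ℕ) (hN : 1 ≤ N) :
    gOne M₀ α N ≤ 5 :=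
  Gaps.gapsBound M₀ hM₀ α N hN
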